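/- Fix integers 1 ≤ k ≤ K. On a probability space, let S_{k−1}, S_k, …, S_{K−1} be independent, identically distributed integrable random N×N real symmetric matrices with common mean S̄ = E[S_t], and let n be a random vector in ℝ^N, independent of (S_{k−1},…,S_{K−1}), with E[n] = 0 and E[n nᵀ] = σ² I. Let Φ_{k:κ−1} = S_{κ−1} S_{κ−2} ⋯ S_k (with Φ_{k:κ−1} = I when κ ≤ k), let H = Σ_{κ=k}^{K} φ_κ Φ_{k:κ−1} for real coefficients φ_κ, let G = Hᵀ H, let D be a deterministic N×N real diagonal matrix, and set ỹ = H (S_{k−1} − D) n. Assuming all the stated expectations exist, (1/N)·tr(E[ỹ ỹᵀ]) = (σ²/N)·( tr(E[G S_{k−1}²]) + tr(E[G] D²) − 2 tr(E[G] S̄ D) ). -/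

import Mathlib

open MeasureTheory ProbabilityTheory Matrix

/-- The (entrywise) measurable space structure on real matrices. -/
instance matMS {N : ℕ} : MeasurableSpace (Matrix (Fin N) (Fin N) ℝ) :=
  (inferInstance : MeasurableSpace (Fin N → Fin N → ℝ))

/-- Entrywise expectation of a random matrix. -/
noncomputable def mExp {Ω : Type} [MeasurableSpace Ω] {N : ℕ} (μ : Measure Ω)
    (X : Ω → Matrix (Fin N) (Fin N) ℝ) : Matrix (Fin N) (Fin N) ℝ :=
  Matrix.of fun i j => ∫ ω, X ω i j ∂μ

/-- The left-continued matrix product `Φ_{a:b−1} = S_{b−1} S_{b−2} ⋯ S_a`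
(equal to `I` when `b ≤ a`). -/
def phiProd {Ω : Type} {N : ℕ} (S : ℕ → Ω → Matrix (Fin N) (Fin N) ℝ) (a b : ℕ) (ω : Ω) :
    Matrix (Fin N) (Fin N) ℝ :=
  (((List.range (b - a)).reverse).map (fun j => S (a + j) ω)).prod

/-- Heterogeneous index type for the joint family consisting of the random vector `n`
(index `none`) and the random matrices (index `some τ`). -/
def famType (N : ℕ) {ι : Type} : Option ι → Type
  | none => Fin N → ℝ
  | some _ => Matrix (Fin N) (Fin N) ℝ

/-- Measurable space structures for the joint family. -/
def famMS (N : ℕ) {ι : Type} : (i : Option ι) → MeasurableSpace (famType N i)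
  | none => (inferInstance : MeasurableSpace (Fin N → ℝ))
  | some _ => matMS

/-- The joint family of random variables: the vector `n` at `none`, matrix `S τ` at `some τ`. -/
def fam {Ω : Type} {N : ℕ} {ι : Type} (S : ι → Ω → Matrix (Fin N) (Fin N) ℝ)
    (n : Ω → Fin N → ℝ) : (i : Option ι) → Ω → famType N i
  | none => n
  | some τ => S τ


namespace S7

variable {Ω : Type} {N : ℕ}

/-- single-entry monomial -/
def mon1 (k K : ℕ) (S : ℕ → Ω → Matrix (Fin N) (Fin N) ℝ)
    (a b : ℕ → Fin N) (e : ℕ → ℕ) : Ω → ℝ :=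
  fun ω => ∏ τ ∈ Finset.Icc (k-1) (K-1), S τ ω (a τ) (b τ) ^ e τ

/-- double-entry monomial -/
def mon2 (k K : ℕ) (S : ℕ → Ω → Matrix (Fin N) (Fin N) ℝ)
    (a b c d : ℕ → Fin N) (e f : ℕ → ℕ) : Ω → ℝ :=
  fun ω => ∏ τ ∈ Finset.Icc (k-1) (K-1),
    S τ ω (a τ) (b τ) ^ e τ * S τ ω (c τ) (d τ) ^ f τ

def V1 (k K : ℕ) (S : ℕ → Ω → Matrix (Fin N) (Fin N) ℝ) (P : ℕ → Prop) :
    Submodule ℝ (Ω → ℝ) :=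
  Submodule.span ℝ {g | ∃ a b e, (∀ τ, ¬ P τ → e τ = 0) ∧ g = mon1 k K S a b e}

def V2 (k K : ℕ) (S : ℕ → Ω → Matrix (Fin N) (Fin N) ℝ) (P : ℕ → Prop) :
    Submodule ℝ (Ω → ℝ) :=
  Submodule.span ℝ
    {g | ∃ a b c d e f, (∀ τ, ¬ P τ → e τ = 0 ∧ f τ = 0) ∧ g = mon2 k K S a b c d e f}

variable {k K : ℕ} {S : ℕ → Ω → Matrix (Fin N) (Fin N) ℝ} {P Q : ℕ → Prop}

lemma V1_mono (h : ∀ τ, P τ → Q τ) : V1 k K S P ≤ V1 k K S Q := by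
  apply Submodule.span_mono
  rintro g ⟨a, b, e, he, rfl⟩
  exact ⟨a, b, e, fun τ hQ => he τ (fun hP => hQ (h τ hP)), rfl⟩

lemma V2_mono (h : ∀ τ, P τ → Q τ) : V2 k K S P ≤ V2 k K S Q := by
  apply Submodule.span_mono
  rintro g ⟨a, b, c, d, e, f, he, rfl⟩
  exact ⟨a, b, c, d, e, f, fun τ hQ => he τ (fun hP => hQ (h τ hP)), rfl⟩

lemma V1_le_V2 : V1 k K S P ≤ V2 k K S P := by
  apply Submodule.span_le.2
  rintro g ⟨a, b, e, he, rfl⟩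
  apply Submodule.subset_span
  refine ⟨a, b, a, b, e, fun _ => 0, fun τ hτ => ⟨he τ hτ, rfl⟩, ?_⟩
  funext ω
  simp [mon1, mon2]

lemma const_mem_V1 (c : ℝ) (i0 : Fin N) : (fun _ : Ω => c) ∈ V1 k K S P := by
  have h1 : (fun _ : Ω => (1:ℝ)) ∈ V1 k K S P := by
    apply Submodule.subset_span
    refine ⟨fun _ => i0, fun _ => i0, fun _ => 0, fun _ _ => rfl, ?_⟩
    funext ω; simp [mon1]
  have : (fun _ : Ω => c) = c • (fun _ : Ω => (1:ℝ)) := by funext ω; simp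
  rw [this]
  exact Submodule.smul_mem _ _ h1

lemma entry_mem_V1 {τ₀ : ℕ} (hτ₀ : τ₀ ∈ Finset.Icc (k-1) (K-1)) (p q : Fin N) :
    (fun ω => S τ₀ ω p q) ∈ V1 k K S (· = τ₀) := by
  apply Submodule.subset_span
  refine ⟨fun _ => p, fun _ => q, fun τ => if τ = τ₀ then 1 else 0,
    fun τ hτ => by simp [hτ], ?_⟩
  funext ω
  unfold mon1
  rw [Finset.prod_eq_single τ₀ (fun τ _ hτ => by simp [hτ]) (fun h => absurd hτ₀ h)]
  simp

lemma mul_entry_mem_V1 {τ₀ : ℕ} (hτ₀ : τ₀ ∈ Finset.Icc (k-1) (K-1)) (hP : ¬ P τ₀)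
    (p q : Fin N) {g : Ω → ℝ} (hg : g ∈ V1 k K S P) :
    (fun ω => S τ₀ ω p q * g ω) ∈ V1 k K S (fun τ => P τ ∨ τ = τ₀) := by
  induction hg using Submodule.span_induction with
  | mem x hx =>
    obtain ⟨a, b, e, he, rfl⟩ := hx
    apply Submodule.subset_span
    refine ⟨Function.update a τ₀ p, Function.update b τ₀ q, Function.update e τ₀ 1,
      fun τ hτ => ?_, ?_⟩
    · have h1 : ¬ P τ := fun h => hτ (Or.inl h)
      have h2 : τ ≠ τ₀ := fun h => hτ (Or.inr h)
      rw [Function.update_of_ne h2]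
      exact he τ h1
    · funext ω
      unfold mon1
      rw [← Finset.mul_prod_erase _ _ hτ₀, ← Finset.mul_prod_erase _ _ hτ₀]
      have h0 : e τ₀ = 0 := he τ₀ hP
      rw [h0]
      simp only [Function.update_self, pow_zero, pow_one, one_mul]
      congr 1
      apply Finset.prod_congr rfl
      intro τ hτ
      have hne : τ ≠ τ₀ := Finset.ne_of_mem_erase hτ
      rw [Function.update_of_ne hne, Function.update_of_ne hne, Function.update_of_ne hne]
  | zero =>
    have : (fun ω => S τ₀ ω p q * (0 : Ω → ℝ) ω) = (0 : Ω → ℝ) := by funext ω; simp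
    rw [this]; exact Submodule.zero_mem _
  | add x y hx hy ihx ihy =>
    have : (fun ω => S τ₀ ω p q * (x + y) ω)
        = (fun ω => S τ₀ ω p q * x ω) + (fun ω => S τ₀ ω p q * y ω) := by
      funext ω; simp [mul_add]
    rw [this]; exact Submodule.add_mem _ ihx ihy
  | smul c x hx ihx =>
    have : (fun ω => S τ₀ ω p q * (c • x) ω) = c • (fun ω => S τ₀ ω p q * x ω) := by
      funext ω; simp; ring
    rw [this]; exact Submodule.smul_mem _ _ ihx

private lemma mul_mem_V2_aux {a b : ℕ → Fin N} {e : ℕ → ℕ}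
    (he : ∀ τ, ¬ P τ → e τ = 0) {h : Ω → ℝ} (hh : h ∈ V1 k K S Q) :
    (fun ω => mon1 k K S a b e ω * h ω) ∈ V2 k K S (fun τ => P τ ∨ Q τ) := by
  induction hh using Submodule.span_induction with
  | mem y hy =>
    obtain ⟨c, d, f, hf, rfl⟩ := hy
    apply Submodule.subset_span
    refine ⟨a, b, c, d, e, f, fun τ hτ => ?_, ?_⟩
    · exact ⟨he τ (fun h => hτ (Or.inl h)), hf τ (fun h => hτ (Or.inr h))⟩
    · funext ω
      unfold mon1 mon2
      rw [← Finset.prod_mul_distrib]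
  | zero =>
    have : (fun ω => mon1 k K S a b e ω * (0 : Ω → ℝ) ω) = (0 : Ω → ℝ) := by
      funext ω; simp
    rw [this]; exact Submodule.zero_mem _
  | add x y hx hy ihx ihy =>
    have : (fun ω => mon1 k K S a b e ω * (x + y) ω)
        = (fun ω => mon1 k K S a b e ω * x ω) + (fun ω => mon1 k K S a b e ω * y ω) := by
      funext ω; simp [mul_add]
    rw [this]; exact Submodule.add_mem _ ihx ihy
  | smul c x hx ihx =>
    have : (fun ω => mon1 k K S a b e ω * (c • x) ω)
        = c • (fun ω => mon1 k K S a b e ω * x ω) := by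
      funext ω; simp; ring
    rw [this]; exact Submodule.smul_mem _ _ ihx

lemma mul_mem_V2 {g h : Ω → ℝ} (hg : g ∈ V1 k K S P) (hh : h ∈ V1 k K S Q) :
    (fun ω => g ω * h ω) ∈ V2 k K S (fun τ => P τ ∨ Q τ) := by
  induction hg using Submodule.span_induction with
  | mem x hx =>
    obtain ⟨a, b, e, he, rfl⟩ := hx
    exact mul_mem_V2_aux he hh
  | zero =>
    have : (fun ω => (0 : Ω → ℝ) ω * h ω) = (0 : Ω → ℝ) := by funext ω; simp
    rw [this]; exact Submodule.zero_mem _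
  | add x y hx hy ihx ihy =>
    have : (fun ω => (x + y) ω * h ω)
        = (fun ω => x ω * h ω) + (fun ω => y ω * h ω) := by
      funext ω; simp [add_mul]
    rw [this]; exact Submodule.add_mem _ ihx ihy
  | smul c x hx ihx =>
    have : (fun ω => (c • x) ω * h ω) = c • (fun ω => x ω * h ω) := by
      funext ω; simp; ring
    rw [this]; exact Submodule.smul_mem _ _ ihx

private lemma mul_mem_V2'_aux (hPQ : ∀ τ, ¬ P τ ∨ ¬ Q τ)
    {a b c d : ℕ → Fin N} {e f : ℕ → ℕ}
    (he : ∀ τ, ¬ P τ → e τ = 0 ∧ f τ = 0) {h : Ω → ℝ} (hh : h ∈ V2 k K S Q) :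
    (fun ω => mon2 k K S a b c d e f ω * h ω) ∈ V2 k K S (fun τ => P τ ∨ Q τ) := by
  classical
  induction hh using Submodule.span_induction with
  | mem y hy =>
    obtain ⟨a', b', c', d', e', f', he', rfl⟩ := hy
    apply Submodule.subset_span
    refine ⟨fun τ => if P τ then a τ else a' τ, fun τ => if P τ then b τ else b' τ,
      fun τ => if P τ then c τ else c' τ, fun τ => if P τ then d τ else d' τ,
      fun τ => if P τ then e τ else e' τ, fun τ => if P τ then f τ else f' τ,
      fun τ hτ => ?_, ?_⟩
    · have h1 : ¬ P τ := fun h => hτ (Or.inl h)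
      have h2 : ¬ Q τ := fun h => hτ (Or.inr h)
      simp only [if_neg h1]
      exact he' τ h2
    · funext ω
      unfold mon2
      rw [← Finset.prod_mul_distrib]
      apply Finset.prod_congr rfl
      intro τ _
      by_cases hPτ : P τ
      · have hQτ : ¬ Q τ := (hPQ τ).resolve_left (by simpa using hPτ)
        obtain ⟨he0, hf0⟩ := he' τ hQτ
        simp [hPτ, he0, hf0]
      · obtain ⟨he0, hf0⟩ := he τ hPτ
        simp [hPτ, he0, hf0]
  | zero =>
    have : (fun ω => mon2 k K S a b c d e f ω * (0 : Ω → ℝ) ω) = (0 : Ω → ℝ) := by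
      funext ω; simp
    rw [this]; exact Submodule.zero_mem _
  | add x y hx hy ihx ihy =>
    have : (fun ω => mon2 k K S a b c d e f ω * (x + y) ω)
        = (fun ω => mon2 k K S a b c d e f ω * x ω)
          + (fun ω => mon2 k K S a b c d e f ω * y ω) := by
      funext ω; simp [mul_add]
    rw [this]; exact Submodule.add_mem _ ihx ihy
  | smul r x hx ihx =>
    have : (fun ω => mon2 k K S a b c d e f ω * (r • x) ω)
        = r • (fun ω => mon2 k K S a b c d e f ω * x ω) := by
      funext ω; simp; ring
    rw [this]; exact Submodule.smul_mem _ _ ihx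

lemma mul_mem_V2' (hPQ : ∀ τ, ¬ P τ ∨ ¬ Q τ) {g h : Ω → ℝ}
    (hg : g ∈ V2 k K S P) (hh : h ∈ V2 k K S Q) :
    (fun ω => g ω * h ω) ∈ V2 k K S (fun τ => P τ ∨ Q τ) := by
  induction hg using Submodule.span_induction with
  | mem x hx =>
    obtain ⟨a, b, c, d, e, f, he, rfl⟩ := hx
    exact mul_mem_V2'_aux hPQ he hh
  | zero =>
    have : (fun ω => (0 : Ω → ℝ) ω * h ω) = (0 : Ω → ℝ) := by funext ω; simp
    rw [this]; exact Submodule.zero_mem _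
  | add x y hx hy ihx ihy =>
    have : (fun ω => (x + y) ω * h ω)
        = (fun ω => x ω * h ω) + (fun ω => y ω * h ω) := by
      funext ω; simp [add_mul]
    rw [this]; exact Submodule.add_mem _ ihx ihy
  | smul c x hx ihx =>
    have : (fun ω => (c • x) ω * h ω) = c • (fun ω => x ω * h ω) := by
      funext ω; simp; ring
    rw [this]; exact Submodule.smul_mem _ _ ihx


-- ### Part 2: measurability, integrability, phiProd entries

lemma phiProd_of_le' {a b : ℕ} (h : b ≤ a) (ω : Ω) : phiProd S a b ω = 1 := by
  unfold phiProd
  rw [Nat.sub_eq_zero_of_le h]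
  simp

lemma phiProd_succ' {a m : ℕ} (h : a ≤ m) (ω : Ω) :
    phiProd S a (m + 1) ω = S m ω * phiProd S a m ω := by
  unfold phiProd
  rw [Nat.succ_sub h, List.range_succ]
  simp [Nat.add_sub_cancel' h]

lemma measurable_of_mem_V2 {m' : MeasurableSpace Ω}
    (hSm : ∀ τ ∈ Finset.Icc (k-1) (K-1), P τ → Measurable[m'] (S τ))
    {g : Ω → ℝ} (hg : g ∈ V2 k K S P) : Measurable[m'] g := by
  induction hg using Submodule.span_induction with
  | mem x hx =>
    obtain ⟨a, b, c, d, e, f, he, rfl⟩ := hx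
    unfold mon2
    apply Finset.measurable_prod
    intro τ hτ
    by_cases hPτ : P τ
    · have hM : Measurable[m'] (S τ) := hSm τ hτ hPτ
      exact (((measurable_pi_apply (b τ)).comp
          ((measurable_pi_apply (a τ)).comp hM)).pow_const (e τ)).mul
        (((measurable_pi_apply (d τ)).comp
          ((measurable_pi_apply (c τ)).comp hM)).pow_const (f τ))
    · obtain ⟨he0, hf0⟩ := he τ hPτ
      have : (fun ω => S τ ω (a τ) (b τ) ^ e τ * S τ ω (c τ) (d τ) ^ f τ)
          = fun _ : Ω => (1:ℝ) := by
        funext ω; rw [he0, hf0]; simp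
      rw [this]
      exact measurable_const
  | zero => exact measurable_const
  | add x y hx hy ihx ihy => exact ihx.add ihy
  | smul c x hx ihx => exact ihx.const_smul c

lemma integrable_of_mem_V2 {mΩ : MeasurableSpace Ω} {μ : Measure Ω}
    (hIntS : ∀ (a b c d : ℕ → Fin N) (e f : ℕ → ℕ),
      Integrable (fun ω => ∏ τ ∈ Finset.Icc (k - 1) (K - 1),
        (S τ ω (a τ) (b τ)) ^ (e τ) * (S τ ω (c τ) (d τ)) ^ (f τ)) μ)
    {g : Ω → ℝ} (hg : g ∈ V2 k K S P) : Integrable g μ := by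
  induction hg using Submodule.span_induction with
  | mem x hx =>
    obtain ⟨a, b, c, d, e, f, he, rfl⟩ := hx
    exact hIntS a b c d e f
  | zero => exact integrable_zero _ _ _
  | add x y hx hy ihx ihy => exact ihx.add ihy
  | smul c x hx ihx => exact ihx.smul c

lemma integrable_mul_nn_of_mem_V2 {mΩ : MeasurableSpace Ω} {μ : Measure Ω}
    {n : Ω → Fin N → ℝ}
    (hIntSn : ∀ (i j : Fin N) (a b c d : ℕ → Fin N) (e f : ℕ → ℕ),
      Integrable (fun ω => (∏ τ ∈ Finset.Icc (k - 1) (K - 1),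
        (S τ ω (a τ) (b τ)) ^ (e τ) * (S τ ω (c τ) (d τ)) ^ (f τ)) * (n ω i * n ω j)) μ)
    (i j : Fin N) {g : Ω → ℝ} (hg : g ∈ V2 k K S P) :
    Integrable (fun ω => g ω * (n ω i * n ω j)) μ := by
  induction hg using Submodule.span_induction with
  | mem x hx =>
    obtain ⟨a, b, c, d, e, f, he, rfl⟩ := hx
    exact hIntSn i j a b c d e f
  | zero =>
    have : (fun ω => (0 : Ω → ℝ) ω * (n ω i * n ω j)) = fun _ : Ω => (0:ℝ) := by
      funext ω; simp
    rw [this]; exact integrable_zero _ _ _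
  | add x y hx hy ihx ihy =>
    have : (fun ω => (x + y) ω * (n ω i * n ω j))
        = fun ω => x ω * (n ω i * n ω j) + y ω * (n ω i * n ω j) := by
      funext ω; simp [add_mul]
    rw [this]; exact ihx.add ihy
  | smul c x hx ihx =>
    have : (fun ω => (c • x) ω * (n ω i * n ω j))
        = fun ω => c * (x ω * (n ω i * n ω j)) := by
      funext ω; simp; ring
    rw [this]; exact ihx.const_mul c

lemma phiProd_entry_mem (hk : 1 ≤ k) {a' : ℕ} (ha : k - 1 ≤ a') {κ : ℕ} (hκ : κ ≤ K)
    (i j : Fin N) :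
    (fun ω => phiProd S a' κ ω i j) ∈ V1 k K S (fun τ => a' ≤ τ ∧ τ < κ) := by
  induction κ generalizing i with
  | zero =>
    have : (fun ω => phiProd S a' 0 ω i j) = fun _ : Ω => ((1 : Matrix (Fin N) (Fin N) ℝ) i j) := by
      funext ω; rw [phiProd_of_le' (Nat.zero_le a')]
    rw [this]
    exact const_mem_V1 _ i
  | succ m ih =>
    by_cases ham : a' ≤ m
    · have hmK : m ≤ K - 1 := Nat.le_sub_one_of_lt (lt_of_lt_of_le (Nat.lt_succ_self m) hκ)
      have hmT : m ∈ Finset.Icc (k-1) (K-1) := Finset.mem_Icc.2 ⟨le_trans ha ham, hmK⟩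
      have hstep : (fun ω => phiProd S a' (m+1) ω i j)
          = fun ω => ∑ l, S m ω i l * phiProd S a' m ω l j := by
        funext ω
        rw [phiProd_succ' ham, Matrix.mul_apply]
      rw [hstep]
      have hsum : (fun ω => ∑ l, S m ω i l * phiProd S a' m ω l j)
          = ∑ l, fun ω => S m ω i l * phiProd S a' m ω l j := by
        funext ω; simp
      rw [hsum]
      apply Submodule.sum_mem
      intro l _
      have hterm := mul_entry_mem_V1 hmT (P := fun τ => a' ≤ τ ∧ τ < m)
        (by intro h; exact absurd h.2 (lt_irrefl m)) i l
        (ih (le_trans (Nat.le_succ m) hκ) l)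
      refine V1_mono ?_ hterm
      rintro τ (⟨h1, h2⟩ | rfl)
      · exact ⟨h1, Nat.lt_succ_of_lt h2⟩
      · exact ⟨ham, Nat.lt_succ_self τ⟩
    · have : (fun ω => phiProd S a' (m+1) ω i j)
          = fun _ : Ω => ((1 : Matrix (Fin N) (Fin N) ℝ) i j) := by
        funext ω
        rw [phiProd_of_le' (by omega)]
      rw [this]
      exact const_mem_V1 _ i




lemma indepFun_of_measurable_comap {Ω β γ β' γ' : Type*} {mΩ : MeasurableSpace Ω}
    {mβ : MeasurableSpace β} {mγ : MeasurableSpace γ}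
    {mβ' : MeasurableSpace β'} {mγ' : MeasurableSpace γ'} {μ : Measure Ω}
    {f : Ω → β} {g : Ω → γ} {X : Ω → β'} {Y : Ω → γ'}
    (hfg : IndepFun f g μ)
    (hX : Measurable[MeasurableSpace.comap f mβ] X)
    (hY : Measurable[MeasurableSpace.comap g mγ] Y) : IndepFun X Y μ := by
  rw [indepFun_iff_measure_inter_preimage_eq_mul] at hfg ⊢
  intro s t hs ht
  obtain ⟨s', hs', hs'eq⟩ := MeasurableSpace.measurableSet_comap.1 (hX hs)
  obtain ⟨t', ht', ht'eq⟩ := MeasurableSpace.measurableSet_comap.1 (hY ht)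
  rw [← hs'eq, ← ht'eq]
  exact hfg s' t' hs' ht'


end S7

/-- Proposition 3, stochastic FIR.
For i.i.d. random symmetric matrices `S_{k−1},…,S_{K−1}` with mean `S̄`, a random vector `n`
independent of them with `E[n] = 0`, `E[n nᵀ] = σ² I`, `H = Σ_{κ=k}^{K} φ_κ Φ_{k:κ−1}`,
`G = Hᵀ H` and `ỹ = H (S_{k−1} − D) n`, assuming the stated expectations exist,
`(1/N)·tr(E[ỹ ỹᵀ]) = (σ²/N)·( tr(E[G S_{k−1}²]) + tr(E[G] D²) − 2 tr(E[G] S̄ D) )`. -/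
theorem stmt7 {Ω : Type} [MeasurableSpace Ω] (μ : Measure Ω) [IsProbabilityMeasure μ]
    {N : ℕ} (hN : 0 < N) (k K : ℕ) (hk : 1 ≤ k) (hkK : k ≤ K)
    (S : ℕ → Ω → Matrix (Fin N) (Fin N) ℝ) (n : Ω → Fin N → ℝ)
    (hmeas : ∀ τ ∈ Finset.Icc (k - 1) (K - 1), Measurable (S τ))
    (hnmeas : Measurable n)
    (hsymm : ∀ τ ∈ Finset.Icc (k - 1) (K - 1), ∀ ω, (S τ ω).IsSymm)
    (hS_int : ∀ τ ∈ Finset.Icc (k - 1) (K - 1), ∀ i j, Integrable (fun ω => S τ ω i j) μ)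
    -- all the expectations appearing below exist:
    (hIntS : ∀ (a b c d : ℕ → Fin N) (e f : ℕ → ℕ),
      Integrable (fun ω => ∏ τ ∈ Finset.Icc (k - 1) (K - 1),
        (S τ ω (a τ) (b τ)) ^ (e τ) * (S τ ω (c τ) (d τ)) ^ (f τ)) μ)
    (hIntSn : ∀ (i j : Fin N) (a b c d : ℕ → Fin N) (e f : ℕ → ℕ),
      Integrable (fun ω => (∏ τ ∈ Finset.Icc (k - 1) (K - 1),
        (S τ ω (a τ) (b τ)) ^ (e τ) * (S τ ω (c τ) (d τ)) ^ (f τ)) * (n ω i * n ω j)) μ)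
    -- the matrices are i.i.d. and `n` is independent of them:
    (hIndep : iIndepFun (m := fun i : Option {τ : ℕ // τ ∈ Finset.Icc (k - 1) (K - 1)} => famMS N i)
      (fam (fun τ : {τ : ℕ // τ ∈ Finset.Icc (k - 1) (K - 1)} => S τ.1) n) μ)
    (hid : ∀ τ ∈ Finset.Icc (k - 1) (K - 1), ∀ τ' ∈ Finset.Icc (k - 1) (K - 1),
      IdentDistrib (S τ) (S τ') μ μ)
    (Sbar : Matrix (Fin N) (Fin N) ℝ)
    (hSbar : ∀ τ ∈ Finset.Icc (k - 1) (K - 1), mExp μ (S τ) = Sbar)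
    (σ : ℝ) (hσ : 0 ≤ σ)
    (hn_mean : ∀ i, ∫ ω, n ω i ∂μ = 0)
    (hn_cov : ∀ i j, ∫ ω, n ω i * n ω j ∂μ = σ ^ 2 * (1 : Matrix (Fin N) (Fin N) ℝ) i j)
    (φ : ℕ → ℝ) (D : Matrix (Fin N) (Fin N) ℝ) (hD : D.IsDiag)
    (H : Ω → Matrix (Fin N) (Fin N) ℝ)
    (hH : ∀ ω, H ω = ∑ κ ∈ Finset.Icc k K, φ κ • phiProd S k κ ω)
    (G : Ω → Matrix (Fin N) (Fin N) ℝ) (hG : ∀ ω, G ω = (H ω)ᵀ * H ω)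
    (y : Ω → Fin N → ℝ)
    (hy : ∀ ω, y ω = (H ω * (S (k - 1) ω - D)).mulVec (n ω)) :
    (1 / N : ℝ) * (mExp μ (fun ω => vecMulVec (y ω) (y ω))).trace
      = (σ ^ 2 / N) *
        ((mExp μ (fun ω => G ω * (S (k - 1) ω) ^ 2)).trace
          + (mExp μ G * D ^ 2).trace - 2 * (mExp μ G * Sbar * D).trace) := by
  classical
  have hk1T : k - 1 ∈ Finset.Icc (k - 1) (K - 1) := Finset.mem_Icc.2 ⟨le_rfl, by omega⟩
  set ι' := {τ : ℕ // τ ∈ Finset.Icc (k - 1) (K - 1)} with hι'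
  letI instF : ∀ i : Option ι', MeasurableSpace (famType N i) := famMS N
  set M : Ω → Matrix (Fin N) (Fin N) ℝ := fun ω => H ω * (S (k - 1) ω - D) with hM
  -- memberships
  have hHmem : ∀ i j : Fin N, (fun ω => H ω i j) ∈ S7.V1 k K S (fun τ => k ≤ τ) := by
    intro i j
    have hrw : (fun ω => H ω i j)
        = ∑ κ ∈ Finset.Icc k K, (φ κ • fun ω => phiProd S k κ ω i j) := by
      funext ω
      rw [hH ω]
      simp [Finset.sum_apply, Matrix.sum_apply, Matrix.smul_apply]
    rw [hrw]
    refine Submodule.sum_mem _ fun κ hκ => Submodule.smul_mem _ _ ?_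
    exact S7.V1_mono (fun τ h => h.1)
      (S7.phiProd_entry_mem hk (Nat.sub_le k 1) (Finset.mem_Icc.1 hκ).2 i j)
  have hMmem : ∀ i a : Fin N, (fun ω => M ω i a) ∈ S7.V1 k K S (fun _ => True) := by
    intro i a
    have hrw : (fun ω => M ω i a)
        = ∑ l, ((fun ω => S (k-1) ω l a * H ω i l) - (D l a) • fun ω => H ω i l) := by
      funext ω
      simp only [hM, Matrix.mul_apply, Matrix.sub_apply, Finset.sum_apply, Pi.sub_apply,
        Pi.smul_apply, smul_eq_mul]
      refine Finset.sum_congr rfl fun l _ => ?_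
      ring
    rw [hrw]
    refine Submodule.sum_mem _ fun l _ => Submodule.sub_mem _ ?_ ?_
    · exact S7.V1_mono (fun τ _ => trivial)
        (S7.mul_entry_mem_V1 hk1T (by omega) l a (hHmem i l))
    · exact Submodule.smul_mem _ _ (S7.V1_mono (fun τ _ => trivial) (hHmem i l))
  have hGmem : ∀ i p : Fin N, (fun ω => G ω i p) ∈ S7.V2 k K S (fun τ => k ≤ τ) := by
    intro i p
    have hrw : (fun ω => G ω i p) = ∑ l, fun ω => H ω l i * H ω l p := by
      funext ω
      simp [hG ω, Matrix.mul_apply, Matrix.transpose_apply, Finset.sum_apply]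
    rw [hrw]
    refine Submodule.sum_mem _ fun l _ => ?_
    exact S7.V2_mono (fun τ h => h.elim id id) (S7.mul_mem_V2 (hHmem l i) (hHmem l p))
  have hGS2mem : ∀ i p q r s t : Fin N,
      (fun ω => G ω i p * (S (k-1) ω q r * S (k-1) ω s t)) ∈
        S7.V2 k K S (fun τ => k ≤ τ ∨ (τ = k - 1 ∨ τ = k - 1)) := by
    intro i p q r s t
    refine S7.mul_mem_V2' (fun τ => ?_) (hGmem i p)
      (S7.mul_mem_V2 (S7.entry_mem_V1 hk1T q r) (S7.entry_mem_V1 hk1T s t))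
    by_cases h : τ = k - 1
    · left; omega
    · right; simp [h]
  have hGSmem : ∀ i p q r : Fin N,
      (fun ω => G ω i p * S (k-1) ω q r) ∈
        S7.V2 k K S (fun τ => k ≤ τ ∨ τ = k - 1) := by
    intro i p q r
    refine S7.mul_mem_V2' (fun τ => ?_) (hGmem i p)
      (S7.V1_le_V2 (S7.entry_mem_V1 hk1T q r))
    by_cases h : τ = k - 1
    · left; omega
    · right; exact h
  -- integrability
  have hIntMM : ∀ i a j b : Fin N, Integrable (fun ω => M ω i a * M ω j b) μ :=
    fun i a j b => S7.integrable_of_mem_V2 hIntS (S7.mul_mem_V2 (hMmem i a) (hMmem j b))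
  have hIntMMnn : ∀ i a j b p q : Fin N,
      Integrable (fun ω => (M ω i a * M ω j b) * (n ω p * n ω q)) μ :=
    fun i a j b p q => S7.integrable_mul_nn_of_mem_V2 hIntSn p q
      (S7.mul_mem_V2 (hMmem i a) (hMmem j b))
  -- independence
  have hfmeas : ∀ i : Option ι', Measurable (fam (fun τ : ι' => S τ.1) n i) := by
    rintro (_ | τ)
    · exact hnmeas
    · exact hmeas τ.1 τ.2
  have I1 : ∀ i a j b : Fin N,
      IndepFun (fun ω => M ω i a * M ω j b) (fun ω => n ω a * n ω b) μ := by
    intro i a j b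
    set sAll : Finset (Option ι') :=
      (Finset.Icc (k-1) (K-1)).attach.map ⟨some, Option.some_injective _⟩ with hsAll
    have hdisj : Disjoint sAll ({none} : Finset (Option ι')) := by
      simp [Finset.disjoint_singleton_right, hsAll]
    have hind := hIndep.indepFun_finset sAll {none} hdisj hfmeas
    apply S7.indepFun_of_measurable_comap hind
    · refine S7.measurable_of_mem_V2 (fun τ hτ _ => ?_)
        (S7.mul_mem_V2 (hMmem i a) (hMmem j b))
      have hmem : (some ⟨τ, hτ⟩ : Option ι') ∈ sAll := by
        simp only [hsAll, Finset.mem_map, Function.Embedding.coeFn_mk]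
        exact ⟨⟨τ, hτ⟩, Finset.mem_attach _ _, rfl⟩
      have h1 : Measurable[MeasurableSpace.comap (fun ω (i : sAll) =>
          fam (fun τ : ι' => S τ.1) n i ω) MeasurableSpace.pi]
          (fun ω (i : sAll) => fam (fun τ : ι' => S τ.1) n i ω) :=
        measurable_iff_comap_le.mpr le_rfl
      exact (measurable_pi_apply (⟨some ⟨τ, hτ⟩, hmem⟩ : sAll)).comp h1
    · have h2 : Measurable[MeasurableSpace.comap
          (fun ω (i : ({none} : Finset (Option ι'))) =>
            fam (fun τ : ι' => S τ.1) n i ω) MeasurableSpace.pi]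
          (fun ω (i : ({none} : Finset (Option ι'))) =>
            fam (fun τ : ι' => S τ.1) n i ω) :=
        measurable_iff_comap_le.mpr le_rfl
      have hn' := (measurable_pi_apply
        (⟨none, Finset.mem_singleton_self none⟩ : ({none} : Finset (Option ι')))).comp h2
      exact ((measurable_pi_apply a).comp hn').mul ((measurable_pi_apply b).comp hn')
  have I2 : ∀ i p q r : Fin N,
      IndepFun (fun ω => G ω i p) (fun ω => S (k-1) ω q r) μ := by
    intro i p q r
    set sG : Finset (Option ι') := ((Finset.Icc (k-1) (K-1)).attach.filter
        (fun τ => k ≤ τ.1)).map ⟨some, Option.some_injective _⟩ with hsG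
    have hdisj : Disjoint sG ({some ⟨k-1, hk1T⟩} : Finset (Option ι')) := by
      rw [Finset.disjoint_singleton_right]
      simp only [hsG, Finset.mem_map, Finset.mem_filter, Function.Embedding.coeFn_mk]
      rintro ⟨⟨τ, hτ⟩, ⟨-, hkτ⟩, hsome⟩
      have hv : τ = k - 1 := congrArg Subtype.val (Option.some_injective _ hsome)
      simp only [hv] at hkτ
      omega
    have hind := hIndep.indepFun_finset sG {some ⟨k-1, hk1T⟩} hdisj hfmeas
    apply S7.indepFun_of_measurable_comap hind
    · refine S7.measurable_of_mem_V2 (fun τ hτ hkτ => ?_) (hGmem i p)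
      have hmem : (some ⟨τ, hτ⟩ : Option ι') ∈ sG := by
        simp only [hsG, Finset.mem_map, Finset.mem_filter]
        exact ⟨⟨τ, hτ⟩, ⟨Finset.mem_attach _ _, hkτ⟩, rfl⟩
      have h1 : Measurable[MeasurableSpace.comap (fun ω (i : sG) =>
          fam (fun τ : ι' => S τ.1) n i ω) MeasurableSpace.pi]
          (fun ω (i : sG) => fam (fun τ : ι' => S τ.1) n i ω) :=
        measurable_iff_comap_le.mpr le_rfl
      exact (measurable_pi_apply (⟨some ⟨τ, hτ⟩, hmem⟩ : sG)).comp h1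
    · have h2 : Measurable[MeasurableSpace.comap
          (fun ω (i : ({some ⟨k-1, hk1T⟩} : Finset (Option ι'))) =>
            fam (fun τ : ι' => S τ.1) n i ω) MeasurableSpace.pi]
          (fun ω (i : ({some ⟨k-1, hk1T⟩} : Finset (Option ι'))) =>
            fam (fun τ : ι' => S τ.1) n i ω) :=
        measurable_iff_comap_le.mpr le_rfl
      have hS' := (measurable_pi_apply
        (⟨some ⟨k-1, hk1T⟩, Finset.mem_singleton_self _⟩ :
          ({some ⟨k-1, hk1T⟩} : Finset (Option ι')))).comp h2
      exact (measurable_pi_apply r).comp ((measurable_pi_apply q).comp hS')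
  -- expectation chain
  have hEG : ∀ i p, (mExp μ G) i p = ∫ ω, G ω i p ∂μ := fun i p => rfl
  have hSbar' : ∀ p q, (∫ ω, S (k-1) ω p q ∂μ) = Sbar p q := by
    intro p q
    rw [← hSbar (k-1) hk1T]
    rfl
  have L1 : (mExp μ (fun ω => vecMulVec (y ω) (y ω))).trace
      = ∑ i, ∫ ω, y ω i * y ω i ∂μ := by
    simp [mExp, Matrix.trace, Matrix.diag, Matrix.vecMulVec_apply]
  have L2 : ∀ i, ∫ ω, y ω i * y ω i ∂μ = σ^2 * ∑ a, ∫ ω, M ω i a * M ω i a ∂μ := by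
    intro i
    have hyi : ∀ ω, y ω i = ∑ a, M ω i a * n ω a := by
      intro ω
      rw [hy ω]
      simp [hM, Matrix.mulVec, dotProduct]
    have hprod : ∀ ω, y ω i * y ω i = ∑ a, ∑ b, (M ω i a * M ω i b) * (n ω a * n ω b) := by
      intro ω
      rw [hyi ω, Finset.sum_mul_sum]
      exact Finset.sum_congr rfl fun a _ => Finset.sum_congr rfl fun b _ => by ring
    calc ∫ ω, y ω i * y ω i ∂μ
        = ∫ ω, ∑ a, ∑ b, (M ω i a * M ω i b) * (n ω a * n ω b) ∂μ :=
          integral_congr_ae (Filter.Eventually.of_forall hprod)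
      _ = ∑ a, ∑ b, ∫ ω, (M ω i a * M ω i b) * (n ω a * n ω b) ∂μ := by
          rw [integral_finset_sum _
            (fun a _ => integrable_finset_sum _ (fun b _ => hIntMMnn i a i b a b))]
          exact Finset.sum_congr rfl fun a _ =>
            integral_finset_sum _ (fun b _ => hIntMMnn i a i b a b)
      _ = ∑ a, ∑ b, (∫ ω, M ω i a * M ω i b ∂μ)
            * (σ^2 * (1 : Matrix (Fin N) (Fin N) ℝ) a b) := by
          refine Finset.sum_congr rfl fun a _ => Finset.sum_congr rfl fun b _ => ?_
          have hXY := (I1 i a i b).integral_mul_eq_mul_integral (hIntMM i a i b).aestronglyMeasurable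
            ((((measurable_pi_apply a).comp hnmeas).mul
              ((measurable_pi_apply b).comp hnmeas)).aestronglyMeasurable)
          rw [← hn_cov a b]
          exact hXY
      _ = σ^2 * ∑ a, ∫ ω, M ω i a * M ω i a ∂μ := by
          rw [Finset.mul_sum]
          refine Finset.sum_congr rfl fun a _ => ?_
          rw [Finset.sum_eq_single a]
          · rw [Matrix.one_apply_eq]; ring
          · intro b _ hb
            rw [Matrix.one_apply_ne (Ne.symm hb)]
            ring
          · intro h; exact absurd (Finset.mem_univ a) h
  -- diagonal-entry memberships and integrability
  have hIntG : ∀ i p : Fin N, Integrable (fun ω => G ω i p) μ :=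
    fun i p => S7.integrable_of_mem_V2 hIntS (hGmem i p)
  have hGS_int : ∀ i p q r : Fin N, Integrable (fun ω => G ω i p * S (k-1) ω q r) μ :=
    fun i p q r => S7.integrable_of_mem_V2 hIntS (hGSmem i p q r)
  have hdiagSS_mem : ∀ i : Fin N, (fun ω => (G ω * (S (k-1) ω * S (k-1) ω)) i i)
      ∈ S7.V2 k K S (fun τ => k ≤ τ ∨ (τ = k - 1 ∨ τ = k - 1)) := by
    intro i
    have hrw : (fun ω => (G ω * (S (k-1) ω * S (k-1) ω)) i i)
        = ∑ p, ∑ q, fun ω => G ω i p * (S (k-1) ω p q * S (k-1) ω q i) := by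
      funext ω
      simp only [Finset.sum_apply, Matrix.mul_apply, Finset.mul_sum]
    rw [hrw]
    exact Submodule.sum_mem _ fun p _ => Submodule.sum_mem _ fun q _ => hGS2mem i p p q q i
  have hIntdiagSS : ∀ i : Fin N,
      Integrable (fun ω => (G ω * (S (k-1) ω * S (k-1) ω)) i i) μ :=
    fun i => S7.integrable_of_mem_V2 hIntS (hdiagSS_mem i)
  have htrSS_int : Integrable (fun ω => (G ω * (S (k-1) ω * S (k-1) ω)).trace) μ := by
    have hrw : (fun ω => (G ω * (S (k-1) ω * S (k-1) ω)).trace)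
        = fun ω => ∑ i, (G ω * (S (k-1) ω * S (k-1) ω)) i i := by
      funext ω; simp [Matrix.trace, Matrix.diag]
    rw [hrw]
    exact integrable_finset_sum _ fun i _ => hIntdiagSS i
  have htrSD_int : Integrable (fun ω => (G ω * (S (k-1) ω * D)).trace) μ := by
    have hrw : (fun ω => (G ω * (S (k-1) ω * D)).trace)
        = fun ω => ∑ i, ∑ p, ∑ q, (G ω i p * S (k-1) ω p q) * D q i := by
      funext ω
      simp only [Matrix.trace, Matrix.diag, Matrix.mul_apply, Finset.mul_sum]
      exact Finset.sum_congr rfl fun i _ => Finset.sum_congr rfl fun p _ =>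
        Finset.sum_congr rfl fun q _ => by ring
    rw [hrw]
    exact integrable_finset_sum _ fun i _ => integrable_finset_sum _ fun p _ =>
      integrable_finset_sum _ fun q _ => (hGS_int i p p q).mul_const _
  have htrDS_int : Integrable (fun ω => (G ω * (D * S (k-1) ω)).trace) μ := by
    have hrw : (fun ω => (G ω * (D * S (k-1) ω)).trace)
        = fun ω => ∑ i, ∑ p, ∑ q, (G ω i p * S (k-1) ω q i) * D p q := by
      funext ω
      simp only [Matrix.trace, Matrix.diag, Matrix.mul_apply, Finset.mul_sum]
      exact Finset.sum_congr rfl fun i _ => Finset.sum_congr rfl fun p _ =>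
        Finset.sum_congr rfl fun q _ => by ring
    rw [hrw]
    exact integrable_finset_sum _ fun i _ => integrable_finset_sum _ fun p _ =>
      integrable_finset_sum _ fun q _ => (hGS_int i p q i).mul_const _
  have htrDD_int : Integrable (fun ω => (G ω * (D * D)).trace) μ := by
    have hrw : (fun ω => (G ω * (D * D)).trace)
        = fun ω => ∑ i, ∑ p, G ω i p * (D * D) p i := by
      funext ω
      simp only [Matrix.trace, Matrix.diag]
      exact Finset.sum_congr rfl fun i _ => by rw [Matrix.mul_apply]
    rw [hrw]
    exact integrable_finset_sum _ fun i _ => integrable_finset_sum _ fun p _ =>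
      (hIntG i p).mul_const _
  have L3 : ∑ i, ∑ a, ∫ ω, M ω i a * M ω i a ∂μ
      = ∫ ω, (G ω * ((S (k-1) ω - D) * (S (k-1) ω - D))).trace ∂μ := by
    calc ∑ i, ∑ a, ∫ ω, M ω i a * M ω i a ∂μ
        = ∑ i : Fin N, ∫ ω, ∑ a, M ω i a * M ω i a ∂μ :=
          Finset.sum_congr rfl fun i _ =>
            (integral_finset_sum _ (fun a _ => hIntMM i a i a)).symm
      _ = ∫ ω, ∑ i, ∑ a, M ω i a * M ω i a ∂μ :=
          (integral_finset_sum _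
            (fun i _ => integrable_finset_sum _ (fun a _ => hIntMM i a i a))).symm
      _ = ∫ ω, (G ω * ((S (k-1) ω - D) * (S (k-1) ω - D))).trace ∂μ := by
          refine integral_congr_ae (Filter.Eventually.of_forall fun ω => ?_)
          show ∑ i, ∑ a, M ω i a * M ω i a
            = (G ω * ((S (k-1) ω - D) * (S (k-1) ω - D))).trace
          have hA : (S (k-1) ω - D)ᵀ = S (k-1) ω - D := by
            rw [Matrix.transpose_sub, hsymm (k-1) hk1T ω, hD.isSymm]
          have h1 : ∑ i, ∑ a, M ω i a * M ω i a = (M ω * (M ω)ᵀ).trace := by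
            simp [Matrix.trace, Matrix.diag, Matrix.mul_apply, Matrix.transpose_apply]
          rw [h1]
          have h2 : M ω * (M ω)ᵀ
              = (H ω * (S (k-1) ω - D)) * ((S (k-1) ω - D) * (H ω)ᵀ) := by
            rw [hM, Matrix.transpose_mul, hA]
          rw [h2, Matrix.trace_mul_comm, hG ω]
          simp only [Matrix.mul_assoc]
          rw [Matrix.trace_mul_comm]
          simp only [Matrix.mul_assoc]
  have L4 : ∫ ω, (G ω * ((S (k-1) ω - D) * (S (k-1) ω - D))).trace ∂μ
      = (∫ ω, (G ω * (S (k-1) ω * S (k-1) ω)).trace ∂μ)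
        - (∫ ω, (G ω * (S (k-1) ω * D)).trace ∂μ)
        - (∫ ω, (G ω * (D * S (k-1) ω)).trace ∂μ)
        + (∫ ω, (G ω * (D * D)).trace ∂μ) := by
    have hpt : ∀ ω, (G ω * ((S (k-1) ω - D) * (S (k-1) ω - D))).trace
        = (G ω * (S (k-1) ω * S (k-1) ω)).trace - (G ω * (S (k-1) ω * D)).trace
          - (G ω * (D * S (k-1) ω)).trace + (G ω * (D * D)).trace := by
      intro ω
      simp only [Matrix.sub_mul, Matrix.mul_sub, Matrix.trace_sub]
      ring
    have int1 : Integrable (fun ω => (G ω * (S (k-1) ω * S (k-1) ω)).trace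
        - (G ω * (S (k-1) ω * D)).trace) μ := htrSS_int.sub htrSD_int
    have int2 : Integrable (fun ω => (G ω * (S (k-1) ω * S (k-1) ω)).trace
        - (G ω * (S (k-1) ω * D)).trace - (G ω * (D * S (k-1) ω)).trace) μ :=
      int1.sub htrDS_int
    rw [integral_congr_ae (Filter.Eventually.of_forall hpt),
      integral_add int2 htrDD_int, integral_sub int1 htrDS_int,
      integral_sub htrSS_int htrSD_int]
  have La : ∫ ω, (G ω * (S (k-1) ω * S (k-1) ω)).trace ∂μ
      = (mExp μ (fun ω => G ω * (S (k - 1) ω) ^ 2)).trace := by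
    have hrwR : (mExp μ (fun ω => G ω * (S (k - 1) ω) ^ 2)).trace
        = ∑ i, ∫ ω, (G ω * (S (k-1) ω * S (k-1) ω)) i i ∂μ := by
      simp [mExp, Matrix.trace, Matrix.diag, pow_two]
    rw [hrwR]
    calc ∫ ω, (G ω * (S (k-1) ω * S (k-1) ω)).trace ∂μ
        = ∫ ω, ∑ i, (G ω * (S (k-1) ω * S (k-1) ω)) i i ∂μ := by
          refine integral_congr_ae (Filter.Eventually.of_forall fun ω => ?_)
          simp [Matrix.trace, Matrix.diag]
      _ = ∑ i, ∫ ω, (G ω * (S (k-1) ω * S (k-1) ω)) i i ∂μ :=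
          integral_finset_sum _ fun i _ => hIntdiagSS i
  have Lb : ∫ ω, (G ω * (D * D)).trace ∂μ = (mExp μ G * D ^ 2).trace := by
    calc ∫ ω, (G ω * (D * D)).trace ∂μ
        = ∫ ω, ∑ i, ∑ p, G ω i p * (D * D) p i ∂μ := by
          refine integral_congr_ae (Filter.Eventually.of_forall fun ω => ?_)
          simp only [Matrix.trace, Matrix.diag]
          exact Finset.sum_congr rfl fun i _ => by rw [Matrix.mul_apply]
      _ = ∑ i, ∑ p, ∫ ω, G ω i p * (D * D) p i ∂μ := by
          rw [integral_finset_sum _ (fun i _ => integrable_finset_sum _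
            (fun p _ => (hIntG i p).mul_const _))]
          exact Finset.sum_congr rfl fun i _ =>
            integral_finset_sum _ (fun p _ => (hIntG i p).mul_const _)
      _ = ∑ i, ∑ p, (mExp μ G) i p * (D * D) p i := by
          refine Finset.sum_congr rfl fun i _ => Finset.sum_congr rfl fun p _ => ?_
          rw [integral_mul_const]
          rfl
      _ = (mExp μ G * D ^ 2).trace := by
          simp [Matrix.trace, Matrix.diag, Matrix.mul_apply, pow_two]
  have hGSsplit : ∀ i p q r : Fin N,
      ∫ ω, G ω i p * S (k-1) ω q r ∂μ = (mExp μ G) i p * Sbar q r := by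
    intro i p q r
    have hXY := (I2 i p q r).integral_mul_eq_mul_integral (hIntG i p).aestronglyMeasurable
      (((measurable_pi_apply r).comp ((measurable_pi_apply q).comp
        (hmeas (k-1) hk1T))).aestronglyMeasurable)
    rw [← hSbar' q r]
    exact hXY
  have Lc : ∫ ω, (G ω * (S (k-1) ω * D)).trace ∂μ = (mExp μ G * Sbar * D).trace := by
    have hpt : (fun ω => (G ω * (S (k-1) ω * D)).trace)
        = fun ω => ∑ i, ∑ p, ∑ q, (G ω i p * S (k-1) ω p q) * D q i := by
      funext ω
      simp only [Matrix.trace, Matrix.diag, Matrix.mul_apply, Finset.mul_sum]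
      exact Finset.sum_congr rfl fun i _ => Finset.sum_congr rfl fun p _ =>
        Finset.sum_congr rfl fun q _ => by ring
    calc ∫ ω, (G ω * (S (k-1) ω * D)).trace ∂μ
        = ∑ i, ∑ p, ∑ q, ∫ ω, (G ω i p * S (k-1) ω p q) * D q i ∂μ := by
          rw [hpt]
          rw [integral_finset_sum _ (fun i _ => integrable_finset_sum _
            (fun p _ => integrable_finset_sum _
              (fun q _ => (hGS_int i p p q).mul_const _)))]
          refine Finset.sum_congr rfl fun i _ => ?_
          rw [integral_finset_sum _ (fun p _ => integrable_finset_sum _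
            (fun q _ => (hGS_int i p p q).mul_const _))]
          exact Finset.sum_congr rfl fun p _ =>
            integral_finset_sum _ (fun q _ => (hGS_int i p p q).mul_const _)
      _ = ∑ i, ∑ p, ∑ q, ((mExp μ G) i p * Sbar p q) * D q i := by
          refine Finset.sum_congr rfl fun i _ => Finset.sum_congr rfl fun p _ =>
            Finset.sum_congr rfl fun q _ => ?_
          rw [integral_mul_const, hGSsplit i p p q]
      _ = (mExp μ G * Sbar * D).trace := by
          simp only [Matrix.trace, Matrix.diag, Matrix.mul_apply, Finset.sum_mul]
          refine Finset.sum_congr rfl fun i _ => ?_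
          rw [Finset.sum_comm]
  have Ld : ∫ ω, (G ω * (D * S (k-1) ω)).trace ∂μ = (mExp μ G * D * Sbar).trace := by
    have hpt : (fun ω => (G ω * (D * S (k-1) ω)).trace)
        = fun ω => ∑ i, ∑ p, ∑ q, (G ω i p * S (k-1) ω q i) * D p q := by
      funext ω
      simp only [Matrix.trace, Matrix.diag, Matrix.mul_apply, Finset.mul_sum]
      exact Finset.sum_congr rfl fun i _ => Finset.sum_congr rfl fun p _ =>
        Finset.sum_congr rfl fun q _ => by ring
    calc ∫ ω, (G ω * (D * S (k-1) ω)).trace ∂μ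
        = ∑ i, ∑ p, ∑ q, ∫ ω, (G ω i p * S (k-1) ω q i) * D p q ∂μ := by
          rw [hpt]
          refine (integral_finset_sum _ (fun i _ => integrable_finset_sum _
            (fun p _ => integrable_finset_sum _
              (fun q _ => (hGS_int i p q i).mul_const _)))).trans ?_
          refine Finset.sum_congr rfl fun i _ => ?_
          refine (integral_finset_sum _ (fun p _ => integrable_finset_sum _
            (fun q _ => (hGS_int i p q i).mul_const _))).trans ?_
          exact Finset.sum_congr rfl fun p _ =>
            integral_finset_sum _ (fun q _ => (hGS_int i p q i).mul_const _)
      _ = ∑ i, ∑ p, ∑ q, ((mExp μ G) i p * Sbar q i) * D p q := by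
          refine Finset.sum_congr rfl fun i _ => Finset.sum_congr rfl fun p _ =>
            Finset.sum_congr rfl fun q _ => ?_
          rw [integral_mul_const, hGSsplit i p q i]
      _ = (mExp μ G * D * Sbar).trace := by
          simp only [Matrix.trace, Matrix.diag, Matrix.mul_apply, Finset.sum_mul]
          refine Finset.sum_congr rfl fun i _ => ?_
          rw [Finset.sum_comm]
          exact Finset.sum_congr rfl fun p _ => Finset.sum_congr rfl fun q _ => by ring
  have Lsym : (mExp μ G * D * Sbar).trace = (mExp μ G * Sbar * D).trace := by
    have hGsymm : ∀ ω, (G ω)ᵀ = G ω := by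
      intro ω
      rw [hG ω, Matrix.transpose_mul, Matrix.transpose_transpose]
    have hEGsymm : (mExp μ G)ᵀ = mExp μ G := by
      ext i j
      show (∫ ω, G ω j i ∂μ) = ∫ ω, G ω i j ∂μ
      refine integral_congr_ae (Filter.Eventually.of_forall fun ω => ?_)
      show G ω j i = G ω i j
      conv_lhs => rw [← hGsymm ω]
      rw [Matrix.transpose_apply]
    have hSbarsymm : Sbarᵀ = Sbar := by
      rw [← hSbar (k-1) hk1T]
      ext i j
      show (∫ ω, S (k-1) ω j i ∂μ) = ∫ ω, S (k-1) ω i j ∂μ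
      refine integral_congr_ae (Filter.Eventually.of_forall fun ω => ?_)
      show S (k-1) ω j i = S (k-1) ω i j
      conv_lhs => rw [← hsymm (k-1) hk1T ω]
      rw [Matrix.transpose_apply]
    have hDsymm : Dᵀ = D := hD.isSymm
    calc (mExp μ G * D * Sbar).trace
        = ((mExp μ G * D * Sbar)ᵀ).trace := (Matrix.trace_transpose _).symm
      _ = (Sbarᵀ * (Dᵀ * (mExp μ G)ᵀ)).trace := by
          rw [Matrix.transpose_mul, Matrix.transpose_mul]
      _ = (Sbar * (D * mExp μ G)).trace := by rw [hSbarsymm, hDsymm, hEGsymm]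
      _ = ((D * mExp μ G) * Sbar).trace := Matrix.trace_mul_comm _ _
      _ = (mExp μ G * Sbar * D).trace := by rw [← Matrix.trace_mul_cycle]
  have key : (mExp μ (fun ω => vecMulVec (y ω) (y ω))).trace
      = σ^2 * ((mExp μ (fun ω => G ω * (S (k - 1) ω) ^ 2)).trace
          + (mExp μ G * D ^ 2).trace - 2 * (mExp μ G * Sbar * D).trace) := by
    rw [L1]
    have : ∑ i, ∫ ω, y ω i * y ω i ∂μ
        = σ^2 * ∑ i, ∑ a, ∫ ω, M ω i a * M ω i a ∂μ := by
      rw [Finset.mul_sum]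
      exact Finset.sum_congr rfl fun i _ => L2 i
    rw [this, L3, L4, La, Lb, Lc, Ld, Lsym]
    ring
  rw [key]
  ring
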